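/- If the Klein bottle group K = ⟨a, b | a^b = a⁻¹⟩ is a verbally closed subgroup of a group G, then the image of K in G/⟨⟨b²⟩⟩, which is isomorphic to the infinite dihedral group D∞ = K/⟨b²⟩, is verbally closed in G/⟨⟨b²⟩⟩. -/

import Mathlib

/-- The single relator `b⁻¹ * a * b * a` of the Klein bottle group
`K = ⟨a, b ∣ b⁻¹ a b = a⁻¹⟩`, with generator `0 = a`, `1 = b`. -/
def KleinRels : Set (FreeGroup (Fin 2)) :=
  {(FreeGroup.of 1)⁻¹ * FreeGroup.of 0 * FreeGroup.of 1 * FreeGroup.of 0}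

/-- The Klein bottle group. -/
abbrev KleinGroup := PresentedGroup KleinRels

def aK : KleinGroup := PresentedGroup.of 0
def bK : KleinGroup := PresentedGroup.of 1


/-- Relators of the infinite dihedral group `D∞ = ⟨a, b ∣ aᵇ = a⁻¹, b² = 1⟩`. -/
def DinfRels : Set (FreeGroup (Fin 2)) :=
  {(FreeGroup.of 1)⁻¹ * FreeGroup.of 0 * FreeGroup.of 1 * FreeGroup.of 0,
    (FreeGroup.of 1) ^ 2}

/-- The infinite dihedral group. -/
abbrev Dinf := PresentedGroup DinfRels

/-- `H` is verbally closed in `G`: every equation `w(x₁,x₂,…) = h` with `h ∈ H`,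
`w` a word in the free group, that has a solution in `G` has a solution in `H`. -/
def VerballyClosed {G : Type*} [Group G] (H : Subgroup G) : Prop :=
  ∀ (w : FreeGroup ℕ) (h : G), h ∈ H → (∃ g : ℕ → G, FreeGroup.lift g w = h) →
    ∃ k : ℕ → G, (∀ n, k n ∈ H) ∧ FreeGroup.lift k w = h

-- ===== auxiliary development =====
namespace KleinVC

/-- model of the Klein bottle group: `ℤ ⋊ ℤ`, `(m,n) ↦ aᵐbⁿ`. -/
@[ext] structure KM where
  a : ℤ
  b : ℤ

namespace KM

/-- `(-1)^n` as an integer. -/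
def e (n : ℤ) : ℤ := (Int.negOnePow n : ℤˣ)

lemma e_add (m n : ℤ) : e (m + n) = e m * e n := by
  simp [e, Int.negOnePow_add]

lemma e_even {n : ℤ} (h : Even n) : e n = 1 := by simp [e, Int.negOnePow_even _ h]
lemma e_odd {n : ℤ} (h : Odd n) : e n = -1 := by simp [e, Int.negOnePow_odd _ h]
lemma e_zero : e 0 = 1 := e_even Even.zero
lemma e_one : e 1 = -1 := e_odd odd_one
lemma e_mul_self (n : ℤ) : e n * e n = 1 := by
  rcases Int.even_or_odd n with h | h
  · rw [e_even h]; ring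
  · rw [e_odd h]; ring
lemma e_sq (n : ℤ) : e n ^ 2 = 1 := by rw [sq, e_mul_self]
lemma e_neg_one : e (-1) = -1 := e_odd (by decide)
lemma e_neg (n : ℤ) : e (-n) = e n := by
  rcases Int.even_or_odd n with h | h
  · rw [e_even h, e_even h.neg]
  · rw [e_odd h, e_odd h.neg]

instance : Mul KM := ⟨fun x y => ⟨x.a + e x.b * y.a, x.b + y.b⟩⟩
instance : One KM := ⟨⟨0, 0⟩⟩
instance : Inv KM := ⟨fun x => ⟨-(e x.b * x.a), -x.b⟩⟩

lemma mul_def (x y : KM) : x * y = ⟨x.a + e x.b * y.a, x.b + y.b⟩ := rfl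
lemma one_def : (1 : KM) = ⟨0, 0⟩ := rfl
lemma inv_def (x : KM) : x⁻¹ = ⟨-(e x.b * x.a), -x.b⟩ := rfl

@[simp] lemma mul_a (x y : KM) : (x * y).a = x.a + e x.b * y.a := rfl
@[simp] lemma mul_b (x y : KM) : (x * y).b = x.b + y.b := rfl
@[simp] lemma one_a : (1 : KM).a = 0 := rfl
@[simp] lemma one_b : (1 : KM).b = 0 := rfl
@[simp] lemma inv_a (x : KM) : (x⁻¹).a = -(e x.b * x.a) := rfl
@[simp] lemma inv_b (x : KM) : (x⁻¹).b = -x.b := rfl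

instance : Group KM where
  mul_assoc x y z := by
    ext
    · show x.a + e x.b * y.a + e (x.b + y.b) * z.a
        = x.a + e x.b * (y.a + e y.b * z.a)
      rw [e_add]; ring
    · show x.b + y.b + z.b = x.b + (y.b + z.b); ring
  one_mul x := by ext <;> simp [e_zero]
  mul_one x := by ext <;> simp
  inv_mul_cancel x := by
    ext
    · show -(e x.b * x.a) + e (-x.b) * x.a = 0
      rw [e_neg]; ring
    · show -x.b + x.b = 0; ring

-- NEW in s2:

/-- second coordinate as a hom. -/
def sndM : KM →* Multiplicative ℤ where
  toFun x := Multiplicative.ofAdd x.b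
  map_one' := rfl
  map_mul' x y := rfl

@[simp] lemma zpow_b (x : KM) (t : ℤ) : (x ^ t).b = t * x.b := by
  have h := map_zpow sndM x t
  have := congrArg Multiplicative.toAdd h
  simpa [sndM, mul_comm] using this

@[simp] lemma pow_b (x : KM) (t : ℕ) : (x ^ t).b = t * x.b := by
  have := zpow_b x (t : ℤ)
  rw [zpow_natCast] at this
  exact_mod_cast this

lemma genA_zpow (α : ℤ) : ∀ m : ℤ, (⟨α, 0⟩ : KM) ^ m = ⟨α * m, 0⟩ := by
  intro m
  induction m using Int.induction_on with
  | zero => simp [one_def]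
  | succ k ih =>
      rw [zpow_add_one, ih, mul_def]
      ext <;> simp [e_zero] <;> ring
  | pred k ih =>
      rw [zpow_sub_one, ih, inv_def, mul_def]
      ext <;> simp [e_zero] <;> ring

lemma genB_zpow (c : ℤ) : ∀ m : ℤ, (⟨0, c⟩ : KM) ^ m = ⟨0, c * m⟩ := by
  intro m
  induction m using Int.induction_on with
  | zero => simp [one_def]
  | succ k ih =>
      rw [zpow_add_one, ih, mul_def]
      ext <;> simp <;> ring
  | pred k ih =>
      rw [zpow_sub_one, ih, inv_def, mul_def]
      ext <;> simp <;> ring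

lemma sq_def (x : KM) : x ^ 2 = ⟨x.a + e x.b * x.a, x.b + x.b⟩ := by
  rw [sq, mul_def]

/-- the subgroup `⟨b²⟩` of the model. -/
def ZE : Subgroup KM where
  carrier := {x | x.a = 0 ∧ Even x.b}
  one_mem' := ⟨rfl, Even.zero⟩
  mul_mem' := by
    rintro x y ⟨hx1, hx2⟩ ⟨hy1, hy2⟩
    exact ⟨by simp [hx1, hy1], hx2.add hy2⟩
  inv_mem' := by
    rintro x ⟨h1, h2⟩
    exact ⟨by simp [h1], h2.neg⟩

lemma mem_ZE {x : KM} : x ∈ ZE ↔ x.a = 0 ∧ Even x.b := Iff.rfl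

instance ZE_normal : ZE.Normal := by
  constructor
  rintro x ⟨h1, h2⟩ g
  refine ⟨?_, by simpa using h2⟩
  simp only [mul_a, mul_b, inv_a, inv_b, h1, mul_zero, add_zero]
  rw [e_add, e_even h2]
  ring_nf
  rw [KM.e_sq]
  ring

lemma sq_mem_ZE {x : KM} (h : Odd x.b) : x ^ 2 ∈ ZE := by
  rw [sq_def]
  exact ⟨by rw [e_odd h]; ring, ⟨x.b, rfl⟩⟩

/-- the subgroup `⟨a², b²⟩` of the model. -/
def EvS : Subgroup KM where
  carrier := {x | Even x.a ∧ Even x.b}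
  one_mem' := ⟨Even.zero, Even.zero⟩
  mul_mem' := by
    rintro x y ⟨hx1, hx2⟩ ⟨hy1, hy2⟩
    exact ⟨hx1.add (hy1.mul_left _), hx2.add hy2⟩
  inv_mem' := by
    rintro x ⟨h1, h2⟩
    exact ⟨((h1.mul_left _).neg), h2.neg⟩

lemma sq_mem_EvS (x : KM) : x ^ 2 ∈ EvS := by
  rw [sq_def]
  rcases Int.even_or_odd x.b with h | h
  · exact ⟨by rw [e_even h]; exact ⟨x.a, by ring⟩, ⟨x.b, rfl⟩⟩
  · exact ⟨by rw [e_odd h]; exact ⟨0, by ring⟩, ⟨x.b, rfl⟩⟩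

def χ (n : ℤ) : ℤ := if Even n then 0 else 1

lemma χ_even {n : ℤ} (h : Even n) : χ n = 0 := if_pos h
lemma χ_odd {n : ℤ} (h : Odd n) : χ n = 1 := if_neg (by simpa [Int.not_even_iff_odd] using h)

lemma χ_add (m n : ℤ) : χ (m + n) = χ m + e m * χ n := by
  rcases Int.even_or_odd m with hm | hm <;> rcases Int.even_or_odd n with hn | hn
  · rw [χ_even (hm.add hn), χ_even hm, χ_even hn]; ring
  · rw [χ_odd (hm.add_odd hn), χ_even hm, χ_odd hn, e_even hm]; ring
  · rw [χ_odd (hm.add_even hn), χ_odd hm, χ_even hn]; ring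
  · rw [χ_even (hm.add_odd hn), χ_odd hm, χ_odd hn, e_odd hm]; ring

/-- the endomorphism `a ↦ a`, `b ↦ aʲb` of the model. -/
def shiftHom (j : ℤ) : KM →* KM :=
  MonoidHom.mk' (fun x => ⟨x.a + j * χ x.b, x.b⟩)
    (by
      intro x y
      rw [mul_def, mul_def]
      ext
      · show x.a + e x.b * y.a + j * χ (x.b + y.b)
          = x.a + j * χ x.b + e x.b * (y.a + j * χ y.b)
        rw [χ_add]; ring
      · rfl)

lemma shiftHom_apply (j : ℤ) (x : KM) : shiftHom j x = ⟨x.a + j * χ x.b, x.b⟩ := rfl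

lemma snd_list_prod (L : List KM) : L.prod.b = (L.map KM.b).sum := by
  induction L with
  | nil => rfl
  | cons x L ih => simp [ih]


end KM


lemma even_list_sum (L : List ℤ) (h : ∀ z ∈ L, Even z) : Even L.sum := by
  induction L with
  | nil => simp
  | cons x L ih =>
      simp only [List.sum_cons]
      exact (h x (by simp)).add (ih fun z hz => h z (by simp [hz]))

lemma range_map_getD {X Y : Type*} (l : List X) (d : X) (f : X → Y) :
    (List.range l.length).map (fun j => f (l.getD j d)) = l.map f := by
  induction l with
  | nil => rfl
  | cons x l ih =>
      simp only [List.length_cons, List.range_succ_eq_map, List.map_cons, List.map_map,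
        List.getD_cons_zero, List.map_cons]
      refine congrArg (f x :: ·) ?_
      rw [← ih]
      rfl


section GenConj
variable {H : Type*} [Group H]

lemma conj_flip {x y : H} (h : y⁻¹ * x * y * x = 1) : y * x * y⁻¹ = x⁻¹ := by
  have h1 : y⁻¹ * x * y = x⁻¹ := by
    have := mul_eq_one_iff_eq_inv.mp h
    simpa using this
  have h2 : y⁻¹ * x⁻¹ * y = x := by
    have := congrArg (fun z => z⁻¹) h1
    simpa [mul_assoc] using this
  have h3 : y * (y⁻¹ * x⁻¹ * y) * y⁻¹ = y * x * y⁻¹ := by rw [h2]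
  rw [← h3]
  group

end GenConj

lemma relK_free : ((FreeGroup.of 1)⁻¹ * FreeGroup.of 0 * FreeGroup.of 1 * FreeGroup.of 0
    : FreeGroup (Fin 2)) ∈ KleinRels := rfl

lemma relK_one : bK⁻¹ * aK * bK * aK = 1 := by
  have h : ((FreeGroup.of 1)⁻¹ * FreeGroup.of 0 * FreeGroup.of 1 * FreeGroup.of 0
      : FreeGroup (Fin 2)) ∈ Subgroup.normalClosure KleinRels :=
    Subgroup.subset_normalClosure relK_free
  have h2 : PresentedGroup.mk KleinRels
      ((FreeGroup.of 1)⁻¹ * FreeGroup.of 0 * FreeGroup.of 1 * FreeGroup.of 0) = 1 :=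
    (QuotientGroup.eq_one_iff _).mpr h
  simp only [map_mul, map_inv] at h2
  exact h2

lemma relK : bK * aK * bK⁻¹ = aK⁻¹ := conj_flip relK_one

lemma relD1_mem : ((FreeGroup.of 1)⁻¹ * FreeGroup.of 0 * FreeGroup.of 1 * FreeGroup.of 0
    : FreeGroup (Fin 2)) ∈ DinfRels := Or.inl rfl
lemma relD2_mem : ((FreeGroup.of 1 : FreeGroup (Fin 2)) ^ 2) ∈ DinfRels := Or.inr rfl

def aD : Dinf := PresentedGroup.of 0
def bD : Dinf := PresentedGroup.of 1

lemma relD_one : bD⁻¹ * aD * bD * aD = 1 := by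
  have h2 : PresentedGroup.mk DinfRels
      ((FreeGroup.of 1)⁻¹ * FreeGroup.of 0 * FreeGroup.of 1 * FreeGroup.of 0) = 1 :=
    (QuotientGroup.eq_one_iff _).mpr (Subgroup.subset_normalClosure relD1_mem)
  simp only [map_mul, map_inv] at h2
  exact h2

lemma relD : bD * aD * bD⁻¹ = aD⁻¹ := conj_flip relD_one

lemma bD_sq : bD ^ (2 : ℕ) = 1 := by
  have h2 : PresentedGroup.mk DinfRels ((FreeGroup.of 1) ^ 2) = 1 :=
    (QuotientGroup.eq_one_iff _).mpr (Subgroup.subset_normalClosure relD2_mem)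
  simp only [map_pow] at h2
  exact h2

lemma bD_even_zpow {n : ℤ} (h : Even n) : bD ^ n = 1 := by
  obtain ⟨t, rfl⟩ := h
  have : t + t = 2 * t := by ring
  rw [this, zpow_mul]
  norm_cast
  rw [bD_sq, one_zpow]


section PairHom
variable {H : Type*} [Group H] {x y : H}

lemma conj_inv_side (h : y * x * y⁻¹ = x⁻¹) : y⁻¹ * x * y = x⁻¹ := by
  have h1 : y * x⁻¹ * y⁻¹ = x := by
    have := congrArg (fun z => z⁻¹) h
    simpa [mul_assoc] using this
  have h2 : y⁻¹ * (y * x⁻¹ * y⁻¹) * y = y⁻¹ * x * y := by rw [h1]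
  rw [← h2]; group

lemma conj_zpow_left (h : y * x * y⁻¹ = x⁻¹) (m : ℤ) : y * x ^ m * y⁻¹ = x ^ (-m) := by
  rw [← conj_zpow, h, inv_zpow, zpow_neg]

lemma conj_zpow_left' (h : y * x * y⁻¹ = x⁻¹) (m : ℤ) : y⁻¹ * x ^ m * y = x ^ (-m) := by
  have h' := conj_inv_side h
  have := conj_zpow (a := y⁻¹) (b := x) (i := m)
  rw [inv_inv] at this
  rw [← this, h', inv_zpow, zpow_neg]

lemma conj_zpow_zpow (h : y * x * y⁻¹ = x⁻¹) :
    ∀ n m : ℤ, y ^ n * x ^ m * (y ^ n)⁻¹ = x ^ (KM.e n * m) := by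
  intro n
  induction n using Int.induction_on with
  | zero => intro m; simp [KM.e_zero]
  | succ k ih =>
      intro m
      have hy : y ^ ((k : ℤ) + 1) = y ^ (k : ℤ) * y := zpow_add_one y k
      have harg : KM.e k * (-m) = KM.e ((k : ℤ) + 1) * m := by
        rw [KM.e_add, KM.e_one]; ring
      calc y ^ ((k : ℤ) + 1) * x ^ m * (y ^ ((k : ℤ) + 1))⁻¹
          = y ^ (k : ℤ) * (y * x ^ m * y⁻¹) * (y ^ (k : ℤ))⁻¹ := by rw [hy]; group
        _ = y ^ (k : ℤ) * x ^ (-m) * (y ^ (k : ℤ))⁻¹ := by rw [conj_zpow_left h]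
        _ = x ^ (KM.e k * (-m)) := ih (-m)
        _ = x ^ (KM.e ((k : ℤ) + 1) * m) := by rw [harg]
  | pred k ih =>
      intro m
      have hy : y ^ (-(k : ℤ) - 1) = y ^ (-(k : ℤ)) * y⁻¹ := zpow_sub_one y (-k)
      have harg : KM.e (-(k : ℤ)) * (-m) = KM.e (-(k : ℤ) - 1) * m := by
        have : (-(k : ℤ) - 1) = -(k : ℤ) + (-1) := by ring
        rw [this, KM.e_add, KM.e_neg_one, KM.e_neg]; ring
      calc y ^ (-(k : ℤ) - 1) * x ^ m * (y ^ (-(k : ℤ) - 1))⁻¹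
          = y ^ (-(k : ℤ)) * (y⁻¹ * x ^ m * y) * (y ^ (-(k : ℤ)))⁻¹ := by rw [hy]; group
        _ = y ^ (-(k : ℤ)) * x ^ (-m) * (y ^ (-(k : ℤ)))⁻¹ := by rw [conj_zpow_left' h]
        _ = x ^ (KM.e (-(k : ℤ)) * (-m)) := ih (-m)
        _ = x ^ (KM.e (-(k : ℤ) - 1) * m) := by rw [harg]

lemma comm_zpow (h : y * x * y⁻¹ = x⁻¹) (n m : ℤ) :
    y ^ n * x ^ m = x ^ (KM.e n * m) * y ^ n := by
  have := conj_zpow_zpow h n m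
  have h2 : y ^ n * x ^ m * (y ^ n)⁻¹ * y ^ n = x ^ (KM.e n * m) * y ^ n := by rw [this]
  simpa [mul_assoc] using h2

/-- The homomorphism `KM →* H` determined by a pair `x y` with `y x y⁻¹ = x⁻¹`. -/
def pairHom (x y : H) (h : y * x * y⁻¹ = x⁻¹) : KM →* H :=
  MonoidHom.mk' (fun z => x ^ z.a * y ^ z.b)
    (by
      intro z w
      show x ^ (z.a + KM.e z.b * w.a) * y ^ (z.b + w.b)
          = (x ^ z.a * y ^ z.b) * (x ^ w.a * y ^ w.b)
      calc x ^ (z.a + KM.e z.b * w.a) * y ^ (z.b + w.b)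
          = x ^ z.a * (x ^ (KM.e z.b * w.a) * y ^ z.b) * y ^ w.b := by
            rw [zpow_add, zpow_add]; group
        _ = x ^ z.a * (y ^ z.b * x ^ w.a) * y ^ w.b := by rw [← comm_zpow h]
        _ = (x ^ z.a * y ^ z.b) * (x ^ w.a * y ^ w.b) := by group)

lemma pairHom_apply (x y : H) (h : y * x * y⁻¹ = x⁻¹) (z : KM) :
    pairHom x y h z = x ^ z.a * y ^ z.b := rfl

end PairHom

lemma kmRelHolds : (⟨0,1⟩ : KM)⁻¹ * ⟨1,0⟩ * ⟨0,1⟩ * ⟨1,0⟩ = (1 : KM) := by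
  ext <;>
    simp [KM.mul_a, KM.mul_b, KM.inv_a, KM.inv_b, KM.one_a, KM.one_b,
      KM.e_zero, KM.e_one, KM.e_neg]

lemma kmBsq : (⟨0,1⟩ : KM) ^ 2 = ⟨0, 2⟩ := by
  rw [KM.sq_def]
  ext <;> simp [KM.e_one] <;> ring

/-- the isomorphism `KleinGroup →* KM`, and its inverse. -/
def θHom : KM →* KleinGroup := pairHom aK bK relK

noncomputable def ψK : KleinGroup →* KM :=
  PresentedGroup.toGroup (f := fun i : Fin 2 => if i = 0 then (⟨1,0⟩ : KM) else ⟨0,1⟩)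
    (by
      intro r hr
      rw [KleinRels] at hr
      rcases hr with rfl
      simp only [map_mul, map_inv, FreeGroup.lift_apply_of]
      norm_num
      exact kmRelHolds)

lemma ψK_a : ψK aK = ⟨1, 0⟩ := by
  simpa [ψK, aK] using PresentedGroup.toGroup.of (f := fun i : Fin 2 => if i = 0 then (⟨1,0⟩ : KM) else ⟨0,1⟩) _ (x := 0)

lemma ψK_b : ψK bK = ⟨0, 1⟩ := by
  simpa [ψK, bK] using PresentedGroup.toGroup.of (f := fun i : Fin 2 => if i = 0 then (⟨1,0⟩ : KM) else ⟨0,1⟩) _ (x := 1)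

lemma θψ_id (k : KleinGroup) : θHom (ψK k) = k := by
  have h : θHom.comp ψK = MonoidHom.id _ := by
    apply PresentedGroup.ext
    intro i
    fin_cases i
    · show θHom (ψK aK) = aK
      rw [ψK_a, θHom, pairHom_apply]
      simp
    · show θHom (ψK bK) = bK
      rw [ψK_b, θHom, pairHom_apply]
      simp
  exact DFunLike.congr_fun h k

lemma ψθ_id (z : KM) : ψK (θHom z) = z := by
  show ψK (aK ^ z.a * bK ^ z.b) = z
  rw [map_mul, map_zpow, map_zpow, ψK_a, ψK_b, KM.genA_zpow, KM.genB_zpow]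
  ext <;> simp [KM.e_zero]

lemma θ_inj : Function.Injective θHom := Function.LeftInverse.injective ψθ_id
lemma θ_surj : Function.Surjective θHom := fun k => ⟨ψK k, θψ_id k⟩

/-- the quotient of the model by `⟨b²⟩`. -/
abbrev KMQ := KM ⧸ KM.ZE

abbrev mkQ : KM →* KMQ := QuotientGroup.mk' KM.ZE

noncomputable def homD : KM →* Dinf := pairHom aD bD relD

lemma homD_ZE (z : KM) (hz : z ∈ KM.ZE) : homD z = 1 := by
  obtain ⟨h1, h2⟩ := hz
  show aD ^ z.a * bD ^ z.b = 1
  rw [h1, zpow_zero, one_mul, bD_even_zpow h2]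

noncomputable def Fbar : KMQ →* Dinf :=
  QuotientGroup.lift KM.ZE homD homD_ZE

noncomputable def Gh : Dinf →* KMQ :=
  PresentedGroup.toGroup
    (f := fun i : Fin 2 => mkQ (if i = 0 then (⟨1,0⟩ : KM) else ⟨0,1⟩))
    (by
      intro r hr
      rw [DinfRels] at hr
      rcases hr with rfl | hr
      · simp only [map_mul, map_inv, FreeGroup.lift_apply_of]
        norm_num
        rw [← QuotientGroup.mk_inv, ← QuotientGroup.mk_mul, ← QuotientGroup.mk_mul,
          ← QuotientGroup.mk_mul, kmRelHolds]
        rfl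
      · rw [Set.mem_singleton_iff] at hr
        subst hr
        simp only [map_pow, FreeGroup.lift_apply_of]
        norm_num
        rw [← QuotientGroup.mk_pow, kmBsq]
        exact (QuotientGroup.eq_one_iff _).mpr ⟨rfl, ⟨1, rfl⟩⟩)

lemma Gh_of (i : Fin 2) :
    Gh (PresentedGroup.of i) = mkQ (if i = 0 then (⟨1,0⟩ : KM) else ⟨0,1⟩) :=
  PresentedGroup.toGroup.of _

lemma Gh_a : Gh aD = mkQ ⟨1, 0⟩ := (Gh_of 0).trans (by norm_num)
lemma Gh_b : Gh bD = mkQ ⟨0, 1⟩ := (Gh_of 1).trans (by norm_num)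

lemma Fbar_mk (z : KM) : Fbar (mkQ z) = homD z := rfl

noncomputable def isoQD : KMQ ≃* Dinf where
  toFun := Fbar
  invFun := Gh
  left_inv := by
    intro q
    induction q using QuotientGroup.induction_on with
    | H z =>
        show Gh (Fbar (mkQ z)) = mkQ z
        rw [Fbar_mk]
        show Gh (aD ^ z.a * bD ^ z.b) = mkQ z
        rw [map_mul, map_zpow, map_zpow, Gh_a, Gh_b, ← map_zpow, ← map_zpow, ← map_mul,
          KM.genA_zpow, KM.genB_zpow]
        congr 1
        ext <;> simp [KM.e_zero]
  right_inv := by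
    have h : Fbar.comp Gh = MonoidHom.id Dinf := by
      apply PresentedGroup.ext
      intro i
      fin_cases i
      · show Fbar (Gh aD) = aD
        rw [Gh_a, Fbar_mk]
        show aD ^ (1 : ℤ) * bD ^ (0 : ℤ) = aD
        simp
      · show Fbar (Gh bD) = bD
        rw [Gh_b, Fbar_mk]
        show aD ^ (0 : ℤ) * bD ^ (1 : ℤ) = bD
        simp
    exact fun d => DFunLike.congr_fun h d
  map_mul' := Fbar.map_mul

section Main
variable {G : Type*} [Group G] (φ : KleinGroup →* G)

noncomputable abbrev Φm : KM →* G := φ.comp θHom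
abbrev Ng : Subgroup G := Subgroup.normalClosure {φ bK ^ 2}
abbrev mkN : G →* G ⧸ Ng φ := QuotientGroup.mk' (Ng φ)

lemma Φm_apply (z : KM) : Φm φ z = φ aK ^ z.a * φ bK ^ z.b := by
  show φ (aK ^ z.a * bK ^ z.b) = _
  rw [map_mul, map_zpow, map_zpow]

lemma Φm_bzpow (n : ℤ) : Φm φ ⟨0, n⟩ = φ bK ^ n := by
  rw [Φm_apply]; simp

lemma Φm_inj (hinj : Function.Injective φ) : Function.Injective (Φm φ) :=
  hinj.comp θ_inj

lemma Φm_range : (Φm φ).range = φ.range := by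
  show (φ.comp θHom).range = _
  rw [MonoidHom.range_comp, MonoidHom.range_eq_top.mpr θ_surj, ← MonoidHom.range_eq_map]

lemma Φm_mem_range (z : KM) : Φm φ z ∈ φ.range := ⟨θHom z, rfl⟩

lemma Bsq_mem : φ bK ^ 2 ∈ Ng φ := Subgroup.subset_normalClosure rfl

lemma Bzpow_two : φ bK ^ (2 : ℤ) = φ bK ^ (2 : ℕ) := by norm_cast

lemma ZE_img_mem (z : KM) (hz : z ∈ KM.ZE) : Φm φ z ∈ Ng φ := by
  obtain ⟨h1, t, ht⟩ := hz
  have hz' : z = ⟨0, 2 * t⟩ := by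
    ext
    · exact h1
    · rw [ht]; ring
  rw [hz', Φm_bzpow, zpow_mul, Bzpow_two]
  exact Subgroup.zpow_mem _ (Bsq_mem φ) t

/-- the signed exponent of a conjugating generator. -/
def sdz (bb : Bool) : ℤ := cond bb 2 (-2)

lemma sdz_not (bb : Bool) : sdz (!bb) = -sdz bb := by cases bb <;> rfl
lemma sdz_even (bb : Bool) : Even (sdz bb) := by cases bb <;> decide
lemma sdz_eq (bb : Bool) : sdz bb = 2 * cond bb 1 (-1) := by cases bb <;> rfl

lemma repN {u : G} (hu : u ∈ Ng φ) :
    ∃ l : List (G × Bool),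
      u = (l.map (fun p => p.1 * φ bK ^ sdz p.2 * p.1⁻¹)).prod := by
  refine Subgroup.closure_induction (fun x hx => ?_) ?_ (fun x y _ _ ihx ihy => ?_)
    (fun x _ ihx => ?_) hu
  · rw [Group.mem_conjugatesOfSet_iff] at hx
    obtain ⟨a, ha, hconj⟩ := hx
    rw [Set.mem_singleton_iff] at ha
    subst ha
    rw [isConj_iff] at hconj
    obtain ⟨c, hc⟩ := hconj
    refine ⟨[(c, true)], ?_⟩
    simp only [List.map_cons, List.map_nil, List.prod_cons, List.prod_nil, mul_one]
    rw [← hc]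
    congr 1
    congr 1
    rw [show sdz true = (2 : ℤ) from rfl, Bzpow_two]
  · exact ⟨[], rfl⟩
  · obtain ⟨lx, hlx⟩ := ihx
    obtain ⟨ly, hly⟩ := ihy
    exact ⟨lx ++ ly, by rw [List.map_append, List.prod_append, hlx, hly]⟩
  · obtain ⟨lx, hlx⟩ := ihx
    refine ⟨(lx.map (fun p => (p.1, !p.2))).reverse, ?_⟩
    rw [hlx, List.prod_inv_reverse, List.map_reverse, List.map_map, List.map_map]
    exact congrArg (fun h => (List.map h lx).reverse.prod)
      (funext fun p => by
        show (p.1 * φ bK ^ sdz p.2 * p.1⁻¹)⁻¹ = p.1 * φ bK ^ sdz (!p.2) * p.1⁻¹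
        rw [sdz_not, zpow_neg]
        group)

lemma transfer (hinj : Function.Injective φ) (hvc : VerballyClosed φ.range)
    (W : FreeGroup ℕ) (t : KM) (hsol : ∃ g : ℕ → G, FreeGroup.lift g W = Φm φ t) :
    ∃ κ : ℕ → KM, FreeGroup.lift κ W = t := by
  obtain ⟨k, hk, hkW⟩ := hvc W (Φm φ t) (Φm_mem_range φ t) hsol
  have hexists : ∀ n, ∃ z : KM, Φm φ z = k n := by
    intro n
    obtain ⟨y, hy⟩ := hk n
    exact ⟨ψK y, by rw [← hy]; exact congrArg φ (θψ_id y)⟩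
  choose κ hκ using hexists
  refine ⟨κ, Φm_inj φ hinj ?_⟩
  have hcomp : (Φm φ).comp (FreeGroup.lift κ) = FreeGroup.lift (fun n => Φm φ (κ n)) :=
    FreeGroup.ext_hom _ _ (by simp)
  have h1 : Φm φ (FreeGroup.lift κ W) = FreeGroup.lift (fun n => Φm φ (κ n)) W :=
    DFunLike.congr_fun hcomp W
  rw [h1, show (fun n => Φm φ (κ n)) = k from funext hκ, hkW]

end Main

lemma sum_map_mul_r {α : Type*} (L : List α) (f : α → ℤ) (r : ℤ) :
    (L.map (fun a => f a * r)).sum = (L.map f).sum * r := by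
  induction L with
  | nil => simp
  | cons a L ih => simp [ih]; ring

section Main2
variable {G : Type*} [Group G] (φ : KleinGroup →* G)

lemma lift_range_prod {H : Type*} [Group H] (g : ℕ → H) (F : ℕ → FreeGroup ℕ) (r : ℕ) :
    FreeGroup.lift g ((List.range r).map F).prod
      = ((List.range r).map (fun j => FreeGroup.lift g (F j))).prod := by
  rw [map_list_prod, List.map_map]
  rfl

lemma conj_sq (p : G × Bool) :
    (p.1 * φ bK ^ (cond p.2 (1:ℤ) (-1)) * p.1⁻¹) ^ (2:ℕ)
      = p.1 * φ bK ^ sdz p.2 * p.1⁻¹ := by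
  rw [conj_pow]
  congr 1
  congr 1
  rw [← zpow_natCast (φ bK ^ (cond p.2 (1:ℤ) (-1))) 2, ← zpow_mul, sdz_eq, mul_comm]
  norm_num

lemma hard1 (hinj : Function.Injective φ) (hvc : VerballyClosed φ.range)
    (x : KM) (hx : Φm φ x ∈ Ng φ) : x ∈ KM.ZE := by
  obtain ⟨l, hl⟩ := repN φ hx
  set d : G × Bool := (1, true) with hd
  -- Step A : both coordinates are even
  have stepA : Even x.b := by
    set cf : ℕ → G := fun j =>
      (l.getD j d).1 * φ bK ^ (cond (l.getD j d).2 (1:ℤ) (-1)) * (l.getD j d).1⁻¹ with hcf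
    have hsq : ∀ p : G × Bool,
        (p.1 * φ bK ^ (cond p.2 (1:ℤ) (-1)) * p.1⁻¹) ^ (2:ℕ)
          = p.1 * φ bK ^ sdz p.2 * p.1⁻¹ := by
      intro p
      rw [conj_pow]
      congr 1
      congr 1
      rw [← zpow_natCast (φ bK ^ (cond p.2 (1:ℤ) (-1))) 2, ← zpow_mul, sdz_eq, mul_comm]
      norm_num
    have hval : FreeGroup.lift cf
        ((List.range l.length).map (fun j => (FreeGroup.of j)^(2:ℕ))).prod = Φm φ x := by
      rw [lift_range_prod]
      have h1 : (fun j => FreeGroup.lift cf ((FreeGroup.of j)^(2:ℕ)))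
          = fun j => (fun p => p.1 * φ bK ^ sdz p.2 * p.1⁻¹) (l.getD j d) := by
        funext j
        rw [map_pow, FreeGroup.lift_apply_of]
        exact hsq (l.getD j d)
      rw [h1, range_map_getD l d (fun p => p.1 * φ bK ^ sdz p.2 * p.1⁻¹), ← hl]
    obtain ⟨κ, hκ⟩ := transfer φ hinj hvc _ x ⟨cf, hval⟩
    have hx2 : x ∈ KM.EvS := by
      rw [← hκ, lift_range_prod]
      have h1 : (fun j => FreeGroup.lift κ ((FreeGroup.of j)^(2:ℕ)))
          = fun j => (κ j)^(2:ℕ) := by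
        funext j
        rw [map_pow, FreeGroup.lift_apply_of]
      rw [h1]
      refine KM.EvS.list_prod_mem ?_
      intro z hz
      rw [List.mem_map] at hz
      obtain ⟨j, _, rfl⟩ := hz
      exact KM.sq_mem_EvS (κ j)
    exact hx2.2
  obtain ⟨v, hv⟩ := id stepA
  -- Step B : the first coordinate vanishes
  set sd : ℕ → ℤ := fun j => sdz (l.getD j d).2 with hsd
  set WB : FreeGroup ℕ :=
    ((List.range l.length).map (fun j =>
        FreeGroup.of (j+1) * (FreeGroup.of 0) ^ (sd j) * (FreeGroup.of (j+1))⁻¹)).prod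
      * (FreeGroup.of 0) ^ ((2:ℤ) - x.b) with hWB
  set gB : ℕ → G := fun i => if i = 0 then φ bK else (l.getD (i-1) d).1 with hgB
  have hvalB : FreeGroup.lift gB WB = Φm φ ⟨x.a, 2⟩ := by
    rw [hWB, map_mul, lift_range_prod, map_zpow, FreeGroup.lift_apply_of]
    have h1 : (fun j => FreeGroup.lift gB
        (FreeGroup.of (j+1) * (FreeGroup.of 0) ^ (sd j) * (FreeGroup.of (j+1))⁻¹))
        = fun j => (fun p => p.1 * φ bK ^ sdz p.2 * p.1⁻¹) (l.getD j d) := by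
      funext j
      rw [map_mul, map_mul, map_inv, map_zpow, FreeGroup.lift_apply_of, FreeGroup.lift_apply_of]
      simp only [hgB, hsd]
      norm_num
    rw [h1, range_map_getD l d (fun p => p.1 * φ bK ^ sdz p.2 * p.1⁻¹), ← hl]
    have hgB0 : gB 0 = φ bK := rfl
    rw [hgB0, ← Φm_bzpow φ ((2:ℤ) - x.b), ← map_mul]
    refine congrArg (Φm φ) ?_
    ext
    · show x.a + KM.e x.b * 0 = x.a
      ring
    · show x.b + (2 - x.b) = 2
      ring
  obtain ⟨κ, hκ⟩ := transfer φ hinj hvc _ ⟨x.a, 2⟩ ⟨gB, hvalB⟩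
  rw [hWB, map_mul, lift_range_prod, map_zpow, FreeGroup.lift_apply_of] at hκ
  set c : KM := κ 0 with hc
  have h1 : (fun j => FreeGroup.lift κ
      (FreeGroup.of (j+1) * (FreeGroup.of 0) ^ (sd j) * (FreeGroup.of (j+1))⁻¹))
      = fun j => κ (j+1) * c ^ (sd j) * (κ (j+1))⁻¹ := by
    funext j
    rw [map_mul, map_mul, map_inv, map_zpow, FreeGroup.lift_apply_of, FreeGroup.lift_apply_of]
  rw [h1] at hκ
  set P : KM := ((List.range l.length).map (fun j => κ (j+1) * c ^ (sd j) * (κ (j+1))⁻¹)).prod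
    with hP
  -- second coordinates
  have hPb : P.b = ((List.range l.length).map sd).sum * c.b := by
    rw [hP, KM.snd_list_prod, List.map_map]
    rw [show ((fun z : KM => z.b) ∘ fun j => κ (j+1) * c ^ (sd j) * (κ (j+1))⁻¹)
        = fun j => sd j * c.b from funext fun j => by
      show (κ (j+1) * c ^ (sd j) * (κ (j+1))⁻¹).b = sd j * c.b
      simp [KM.mul_b, KM.inv_b, KM.zpow_b]]
    exact sum_map_mul_r _ _ _
  obtain ⟨E, hE⟩ : Even (((List.range l.length).map sd).sum) := by
    refine even_list_sum _ ?_
    intro z hz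
    rw [List.mem_map] at hz
    obtain ⟨j, _, rfl⟩ := hz
    exact sdz_even _
  have hsnd : c.b * (E + 1 - v) = 1 := by
    have h2 := congrArg KM.b hκ
    rw [KM.mul_b, hPb, KM.zpow_b, hE, hv] at h2
    have h3 : (2:ℤ) * (c.b * (E + 1 - v)) = 2 * 1 := by
      rw [mul_one]
      calc (2:ℤ) * (c.b * (E + 1 - v)) = (E + E) * c.b + (2 - (v + v)) * c.b := by ring
      _ = 2 := h2
    exact mul_left_cancel₀ two_ne_zero h3
  have hodd : Odd c.b := by
    rcases Int.isUnit_iff.mp (IsUnit.of_mul_eq_one _ hsnd) with h | h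
    · rw [h]; exact odd_one
    · rw [h]; exact ⟨-1, by ring⟩
  have hc2 : c ^ (2:ℕ) ∈ KM.ZE := KM.sq_mem_ZE hodd
  have hc2' : c ^ (2:ℤ) ∈ KM.ZE := by
    rw [show (2:ℤ) = ((2:ℕ):ℤ) from rfl, zpow_natCast]
    exact hc2
  have hczpow : ∀ t : ℤ, c ^ (2 * t) ∈ KM.ZE := by
    intro t
    rw [zpow_mul]
    exact KM.ZE.zpow_mem hc2' t
  have hPmem : P ∈ KM.ZE := by
    refine KM.ZE.list_prod_mem ?_
    intro z hz
    rw [List.mem_map] at hz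
    obtain ⟨j, _, rfl⟩ := hz
    refine KM.ZE_normal.conj_mem _ ?_ _
    show c ^ (sdz (l.getD j d).2) ∈ KM.ZE
    rw [sdz_eq]
    exact hczpow _
  have htot : P * c ^ ((2:ℤ) - x.b) ∈ KM.ZE := by
    refine KM.ZE.mul_mem hPmem ?_
    rw [show (2:ℤ) - x.b = 2 * (1 - v) from by rw [hv]; ring]
    exact hczpow _
  rw [hκ] at htot
  exact ⟨htot.1, stepA⟩

lemma ker_eq (hinj : Function.Injective φ) (hvc : VerballyClosed φ.range) :
    ((mkN φ).comp (Φm φ)).ker = KM.ZE := by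
  ext z
  constructor
  · intro hz
    refine hard1 φ hinj hvc z ?_
    have h1 : Φm φ z ∈ (mkN φ).ker := hz
    rwa [QuotientGroup.ker_mk'] at h1
  · intro hz
    show Φm φ z ∈ (mkN φ).ker
    rw [QuotientGroup.ker_mk']
    exact ZE_img_mem φ z hz

lemma iso_lemma (hinj : Function.Injective φ) (hvc : VerballyClosed φ.range) :
    Nonempty ((φ.range.map (mkN φ)) ≃* Dinf) := by
  have hrange : ((mkN φ).comp (Φm φ)).range = φ.range.map (mkN φ) := by
    rw [MonoidHom.range_comp, Φm_range]
  have e1 := QuotientGroup.quotientKerEquivRange ((mkN φ).comp (Φm φ))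
  have e2 := QuotientGroup.quotientMulEquivOfEq (ker_eq φ hinj hvc)
  exact ⟨(MulEquiv.subgroupCongr hrange).symm.trans (e1.symm.trans (e2.trans isoQD))⟩

end Main2

lemma lift_comp_hom {H K : Type*} [Group H] [Group K] (F : H →* K) (g : ℕ → H)
    (u : FreeGroup ℕ) :
    FreeGroup.lift (fun i => F (g i)) u = F (FreeGroup.lift g u) := by
  have h : FreeGroup.lift (fun i => F (g i)) = F.comp (FreeGroup.lift g) :=
    FreeGroup.ext_hom _ _ (by simp)
  rw [h]; rfl

lemma lift_map2 {H : Type*} [Group H] (g : ℕ → H) (u : FreeGroup ℕ) :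
    FreeGroup.lift g (FreeGroup.map (fun i => 2*i) u)
      = FreeGroup.lift (fun i => g (2*i)) u := by
  have h : (FreeGroup.lift g).comp (FreeGroup.map (fun i => 2*i))
      = FreeGroup.lift (fun i => g (2*i)) :=
    FreeGroup.ext_hom _ _ (by simp)
  exact DFunLike.congr_fun h u

lemma lift_one_hom {H : Type*} [Group H] (u : FreeGroup ℕ) :
    FreeGroup.lift (fun _ => (1 : H)) u = 1 := by
  have h : FreeGroup.lift (fun _ => (1 : H)) = (1 : FreeGroup ℕ →* H) :=
    FreeGroup.ext_hom _ _ (by simp)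
  rw [h]; rfl

section Main3
variable {G : Type*} [Group G] (φ : KleinGroup →* G)

lemma sol_of_value (w : FreeGroup ℕ) (hbar : G ⧸ Ng φ) (x0 : KM)
    (hx0 : mkN φ (Φm φ x0) = hbar) (κw : ℕ → KM) (Yv : KM)
    (hlift : FreeGroup.lift κw w = Yv) (ha : Yv.a = x0.a) (hb : Even (Yv.b - x0.b)) :
    ∃ k : ℕ → G ⧸ Ng φ, (∀ n, k n ∈ φ.range.map (mkN φ))
      ∧ FreeGroup.lift k w = hbar := by
  refine ⟨fun i => mkN φ (Φm φ (κw i)), ?_, ?_⟩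
  · intro n
    exact Subgroup.mem_map.mpr ⟨Φm φ (κw n), Φm_mem_range φ _, rfl⟩
  · have h1 : FreeGroup.lift (fun i => mkN φ (Φm φ (κw i))) w
        = mkN φ (Φm φ (FreeGroup.lift κw w)) := by
      rw [show (fun i => mkN φ (Φm φ (κw i))) = fun i => ((mkN φ).comp (Φm φ)) (κw i)
          from rfl, lift_comp_hom]
      rfl
    rw [h1, hlift]
    have hsplit : Yv = x0 * ⟨0, Yv.b - x0.b⟩ := by
      ext
      · show Yv.a = x0.a + KM.e x0.b * 0
        rw [ha]; ring
      · show Yv.b = x0.b + (Yv.b - x0.b)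
        ring
    rw [hsplit, map_mul, map_mul, hx0]
    have h2 : mkN φ (Φm φ ⟨0, Yv.b - x0.b⟩) = 1 :=
      (QuotientGroup.eq_one_iff _).mpr (ZE_img_mem φ ⟨0, Yv.b - x0.b⟩ ⟨rfl, hb⟩)
    rw [h2, mul_one]

lemma vc_image (hinj : Function.Injective φ) (hvc : VerballyClosed φ.range) :
    VerballyClosed (φ.range.map (mkN φ)) := by
  intro w hbar hmem hsol
  obtain ⟨hG, hGmem, hGeq⟩ := Subgroup.mem_map.mp hmem
  obtain ⟨y0, hy0⟩ := hGmem
  set x0 : KM := ψK y0 with hx0def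
  have hΦx0 : Φm φ x0 = hG := by
    show φ (θHom (ψK y0)) = hG
    rw [θψ_id]; exact hy0
  have hx0bar : mkN φ (Φm φ x0) = hbar := by rw [hΦx0]; exact hGeq
  obtain ⟨gbar, hgbar⟩ := hsol
  choose gh hgh using fun i => QuotientGroup.mk'_surjective (Ng φ) (gbar i)
  set V0 : G := FreeGroup.lift gh w with hV0
  have hmkV0 : mkN φ V0 = hbar := by
    rw [hV0, ← lift_comp_hom (mkN φ) gh w,
      show (fun i => mkN φ (gh i)) = gbar from funext hgh, hgbar]
  set d : G × Bool := (1, true) with hd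
  rcases Int.even_or_odd x0.b with hq | hq
  · -- the image of the constant has even `b`-exponent
    by_cases hpa : x0.a = 0
    · have h1 : hbar = 1 := by
        rw [← hx0bar]
        exact (QuotientGroup.eq_one_iff _).mpr (ZE_img_mem φ x0 ⟨hpa, hq⟩)
      refine ⟨fun _ => 1, fun n => Subgroup.one_mem _, ?_⟩
      rw [lift_one_hom, h1]
    · set core : G := V0 * V0 * φ bK * V0⁻¹ * V0⁻¹ * φ bK with hcore
      set t4 : KM := ⟨4 * x0.a, 2⟩ with ht4
      have hmodel : x0 * x0 * ⟨0,1⟩ * x0⁻¹ * x0⁻¹ * ⟨0,1⟩ = t4 := by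
        rw [ht4]
        ext <;> (simp [KM.mul_a, KM.mul_b, KM.inv_a, KM.inv_b, KM.e_add, KM.e_neg,
          KM.e_even hq, KM.e_one]; try ring)
      have hBone : Φm φ ⟨0, 1⟩ = φ bK := by
        have h := Φm_bzpow φ 1
        rwa [zpow_one] at h
      have hcorebar : mkN φ core = mkN φ (Φm φ t4) := by
        have e1 : mkN φ core
            = mkN φ (Φm φ x0) * mkN φ (Φm φ x0) * mkN φ (Φm φ ⟨0,1⟩)
              * (mkN φ (Φm φ x0))⁻¹ * (mkN φ (Φm φ x0))⁻¹ * mkN φ (Φm φ ⟨0,1⟩) := by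
          rw [hcore]
          simp only [map_mul, map_inv]
          rw [hmkV0, hx0bar, hBone]
        rw [e1]
        simp only [← map_inv, ← map_mul]
        rw [hmodel]
      set m0 : G := core⁻¹ * Φm φ t4 with hm0
      have hm0mem : m0 ∈ Ng φ := by
        refine (QuotientGroup.eq_one_iff m0).mp ?_
        show mkN φ m0 = 1
        rw [hm0, map_mul, map_inv, hcorebar]
        exact inv_mul_cancel _
      obtain ⟨l, hl⟩ := repN φ hm0mem
      set sd : ℕ → ℤ := fun j => sdz (l.getD j d).2 with hsd
      set w2 : FreeGroup ℕ := FreeGroup.map (fun i => 2*i) w with hw2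
      set Gad : FreeGroup ℕ := ((List.range l.length).map (fun j =>
          FreeGroup.of (2*j+3) * (FreeGroup.of 1) ^ (sd j) * (FreeGroup.of (2*j+3))⁻¹)).prod
        with hGad
      set W : FreeGroup ℕ := w2 * w2 * FreeGroup.of 1 * w2⁻¹ * w2⁻¹ * FreeGroup.of 1 * Gad
        with hW
      set gc : ℕ → G := fun i =>
        if i % 2 = 0 then gh (i/2) else if i = 1 then φ bK else (l.getD ((i-3)/2) d).1
        with hgc
      have hgc2 : (fun i => gc (2*i)) = gh := by
        funext i
        have h1 : (2*i) % 2 = 0 := by omega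
        have h2 : (2*i)/2 = i := by omega
        simp [hgc, h1, h2]
      have hgc1 : gc 1 = φ bK := by norm_num [hgc]
      have hgc3 : ∀ j : ℕ, gc (2*j+3) = (l.getD j d).1 := by
        intro j
        have h1 : (2*j+3) % 2 = 1 := by omega
        have h2 : ¬((2*j+3) = 1) := by omega
        have h3 : (2*j+3-3)/2 = j := by omega
        simp [hgc, h1, h2, h3]
      have hGadval : FreeGroup.lift gc Gad = m0 := by
        rw [hGad, lift_range_prod]
        have h1 : (fun j => FreeGroup.lift gc (FreeGroup.of (2*j+3)
            * (FreeGroup.of 1) ^ (sd j) * (FreeGroup.of (2*j+3))⁻¹))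
            = fun j => (fun p => p.1 * φ bK ^ sdz p.2 * p.1⁻¹) (l.getD j d) := by
          funext j
          rw [map_mul, map_mul, map_inv, map_zpow, FreeGroup.lift_apply_of, FreeGroup.lift_apply_of,
            hgc3, hgc1]
        rw [h1, range_map_getD l d (fun p => p.1 * φ bK ^ sdz p.2 * p.1⁻¹), ← hl]
      have hval : FreeGroup.lift gc W = Φm φ t4 := by
        rw [hW]
        simp only [map_mul, map_inv, FreeGroup.lift_apply_of]
        rw [hw2, lift_map2, hgc2, ← hV0, hgc1, hGadval, ← hcore, hm0]
        exact mul_inv_cancel_left _ _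
      obtain ⟨κ, hκ⟩ := transfer φ hinj hvc _ t4 ⟨gc, hval⟩
      rw [hW] at hκ
      simp only [map_mul, map_inv, FreeGroup.lift_apply_of] at hκ
      rw [hw2, lift_map2] at hκ
      set Y : KM := FreeGroup.lift (fun i => κ (2*i)) w with hY
      set c0 : KM := κ 1 with hc0
      have hGadκ : FreeGroup.lift κ Gad
          = ((List.range l.length).map
              (fun j => κ (2*j+3) * c0 ^ (sd j) * (κ (2*j+3))⁻¹)).prod := by
        rw [hGad, lift_range_prod]
        have h1 : (fun j => FreeGroup.lift κ (FreeGroup.of (2*j+3)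
            * (FreeGroup.of 1) ^ (sd j) * (FreeGroup.of (2*j+3))⁻¹))
            = fun j => κ (2*j+3) * c0 ^ (sd j) * (κ (2*j+3))⁻¹ := by
          funext j
          rw [map_mul, map_mul, map_inv, map_zpow, FreeGroup.lift_apply_of, FreeGroup.lift_apply_of]
        rw [h1]
      rw [hGadκ] at hκ
      set P : KM := ((List.range l.length).map
          (fun j => κ (2*j+3) * c0 ^ (sd j) * (κ (2*j+3))⁻¹)).prod with hP
      have hPb : P.b = ((List.range l.length).map sd).sum * c0.b := by
        rw [hP, KM.snd_list_prod, List.map_map]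
        rw [show ((fun z : KM => z.b) ∘ fun j => κ (2*j+3) * c0 ^ (sd j) * (κ (2*j+3))⁻¹)
            = fun j => sd j * c0.b from funext fun j => by
          show (κ (2*j+3) * c0 ^ (sd j) * (κ (2*j+3))⁻¹).b = sd j * c0.b
          simp [KM.mul_b, KM.inv_b, KM.zpow_b]]
        exact sum_map_mul_r _ _ _
      obtain ⟨E, hE⟩ : Even (((List.range l.length).map sd).sum) := by
        refine even_list_sum _ ?_
        intro z hz
        rw [List.mem_map] at hz
        obtain ⟨j, _, rfl⟩ := hz
        exact sdz_even _
      have hsndeq := congrArg KM.b hκ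
      simp only [KM.mul_b, KM.inv_b, ht4] at hsndeq
      have hsnd : c0.b * (1 + E) = 1 := by
        rw [hPb, hE] at hsndeq
        have h3 : (2:ℤ) * (c0.b * (1 + E)) = 2 * 1 := by
          rw [mul_one]
          calc (2:ℤ) * (c0.b * (1 + E))
              = Y.b + Y.b + c0.b + -Y.b + -Y.b + c0.b + (E + E) * c0.b := by ring
            _ = 2 := hsndeq
        exact mul_left_cancel₀ two_ne_zero h3
      have hodd : Odd c0.b := by
        rcases Int.isUnit_iff.mp (IsUnit.of_mul_eq_one _ hsnd) with h | h
        · rw [h]; exact odd_one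
        · rw [h]; exact ⟨-1, by ring⟩
      have heμ : KM.e c0.b = -1 := KM.e_odd hodd
      have hc2' : c0 ^ (2:ℤ) ∈ KM.ZE := by
        rw [show (2:ℤ) = ((2:ℕ):ℤ) from rfl, zpow_natCast]
        exact KM.sq_mem_ZE hodd
      have hczpow : ∀ t : ℤ, c0 ^ (2 * t) ∈ KM.ZE := by
        intro t
        rw [zpow_mul]
        exact KM.ZE.zpow_mem hc2' t
      have hPmem : P ∈ KM.ZE := by
        refine KM.ZE.list_prod_mem ?_
        intro z hz
        rw [List.mem_map] at hz
        obtain ⟨j, _, rfl⟩ := hz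
        refine KM.ZE_normal.conj_mem _ ?_ _
        show c0 ^ (sdz (l.getD j d).2) ∈ KM.ZE
        rw [sdz_eq]
        exact hczpow _
      have hP0 : P.a = 0 := hPmem.1
      rcases Int.even_or_odd Y.b with hYb | hYb
      · have ha := congrArg KM.a hκ
        simp only [KM.mul_a, KM.mul_b, KM.inv_a, KM.inv_b, KM.e_add, KM.e_neg,
          KM.e_even hYb, heμ, hP0, ht4] at ha
        have hYa : Y.a = x0.a := by omega
        exact sol_of_value φ w hbar x0 hx0bar (fun i => κ (2*i)) Y hY.symm hYa
          (hYb.sub hq)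
      · have ha := congrArg KM.a hκ
        simp only [KM.mul_a, KM.mul_b, KM.inv_a, KM.inv_b, KM.e_add, KM.e_neg,
          KM.e_odd hYb, heμ, hP0, ht4] at ha
        exact absurd (by omega : x0.a = 0) hpa
  · -- the image of the constant has odd `b`-exponent
    set n0 : G := V0⁻¹ * hG with hn0
    have hn0mem : n0 ∈ Ng φ := by
      refine (QuotientGroup.eq_one_iff n0).mp ?_
      show mkN φ n0 = 1
      rw [hn0, map_mul, map_inv, hmkV0, hGeq]
      exact inv_mul_cancel _
    obtain ⟨l, hl⟩ := repN φ hn0mem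
    set w2 : FreeGroup ℕ := FreeGroup.map (fun i => 2*i) w with hw2
    set cf : ℕ → G := fun j =>
      (l.getD j d).1 * φ bK ^ (cond (l.getD j d).2 (1:ℤ) (-1)) * (l.getD j d).1⁻¹ with hcf
    set Sq : FreeGroup ℕ :=
      ((List.range l.length).map (fun j => (FreeGroup.of (2*j+1))^(2:ℕ))).prod with hSq
    set W : FreeGroup ℕ := w2 * Sq with hW
    set ga : ℕ → G := fun i => if i % 2 = 0 then gh (i/2) else cf ((i-1)/2) with hga
    have hga2 : (fun i => ga (2*i)) = gh := by
      funext i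
      have h1 : (2*i) % 2 = 0 := by omega
      have h2 : (2*i)/2 = i := by omega
      simp [hga, h1, h2]
    have hga1 : ∀ j : ℕ, ga (2*j+1) = cf j := by
      intro j
      have h1 : (2*j+1) % 2 = 1 := by omega
      have h3 : (2*j+1-1)/2 = j := by omega
      simp [hga, h1, h3]
    have hval : FreeGroup.lift ga W = Φm φ x0 := by
      rw [hW, map_mul, hw2, lift_map2, hga2, ← hV0]
      have hSqval : FreeGroup.lift ga Sq = n0 := by
        rw [hSq, lift_range_prod]
        have h1 : (fun j => FreeGroup.lift ga ((FreeGroup.of (2*j+1))^(2:ℕ)))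
            = fun j => (fun p => p.1 * φ bK ^ sdz p.2 * p.1⁻¹) (l.getD j d) := by
          funext j
          rw [map_pow, FreeGroup.lift_apply_of, hga1]
          exact conj_sq φ (l.getD j d)
        rw [h1, range_map_getD l d (fun p => p.1 * φ bK ^ sdz p.2 * p.1⁻¹), ← hl]
      rw [hSqval, hn0]
      exact (mul_inv_cancel_left _ _).trans hΦx0.symm
    obtain ⟨κ, hκ⟩ := transfer φ hinj hvc _ x0 ⟨ga, hval⟩
    rw [hW, map_mul, hw2, lift_map2] at hκ
    set Y : KM := FreeGroup.lift (fun i => κ (2*i)) w with hY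
    set T : KM := FreeGroup.lift κ Sq with hT
    have hTmem : T ∈ KM.EvS := by
      rw [hT, hSq, lift_range_prod]
      have h1 : (fun j => FreeGroup.lift κ ((FreeGroup.of (2*j+1))^(2:ℕ)))
          = fun j => (κ (2*j+1))^(2:ℕ) := by
        funext j
        rw [map_pow, FreeGroup.lift_apply_of]
      rw [h1]
      refine KM.EvS.list_prod_mem ?_
      intro z hz
      rw [List.mem_map] at hz
      obtain ⟨j, _, rfl⟩ := hz
      exact KM.sq_mem_EvS _
    obtain ⟨hTa, hTb⟩ := hTmem
    have hYeq : Y = x0 * T⁻¹ := by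
      rw [← hκ]
      group
    have hYb : Y.b = x0.b + -T.b := by rw [hYeq]; simp [KM.mul_b, KM.inv_b]
    have hYbodd : Odd Y.b := by
      rw [hYb]
      exact hq.add_even hTb.neg
    have hYa : Y.a = x0.a + T.a := by
      rw [hYeq]
      simp only [KM.mul_a, KM.inv_a]
      rw [KM.e_odd hq, KM.e_even hTb]
      ring
    refine sol_of_value φ w hbar x0 hx0bar
      (fun i => KM.shiftHom (-T.a) (κ (2*i))) ⟨x0.a, Y.b⟩ ?_ rfl ?_
    · rw [show (fun i => KM.shiftHom (-T.a) (κ (2*i)))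
          = fun i => KM.shiftHom (-T.a) ((fun i => κ (2*i)) i) from rfl,
        lift_comp_hom, ← hY, KM.shiftHom_apply]
      ext
      · show Y.a + (-T.a) * KM.χ Y.b = x0.a
        rw [KM.χ_odd hYbodd, hYa]
        ring
      · rfl
    · show Even (Y.b - x0.b)
      rw [hYb]
      have : x0.b + -T.b - x0.b = -T.b := by ring
      rw [this]
      exact hTb.neg

end Main3

end KleinVC

/-- If the Klein bottle group `K` is verbally closed in `G`, then the image of `K`
in `G/⟨⟨b²⟩⟩` — which is isomorphic to the infinite dihedral group `K/⟨b²⟩` — is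
verbally closed in `G/⟨⟨b²⟩⟩`. -/
theorem image_dihedral_verballyClosed {G : Type*} [Group G] (φ : KleinGroup →* G)
    (hinj : Function.Injective φ) (hvc : VerballyClosed φ.range) :
    Nonempty ((φ.range.map (QuotientGroup.mk' (Subgroup.normalClosure {φ bK ^ 2}))) ≃* Dinf) ∧
      VerballyClosed (φ.range.map (QuotientGroup.mk' (Subgroup.normalClosure {φ bK ^ 2}))) :=
  ⟨KleinVC.iso_lemma φ hinj hvc, KleinVC.vc_image φ hinj hvc⟩
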